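/- (Steps three to five of the proof of the key Lemma 2.1: spectral-gap bound for the projected eigenvector.) Let φ_1, …, φ_N ∈ V span a subspace W, be b-orthonormal (b(φ_k, φ_l) = δ_{kl}), and satisfy a(φ_k, w) = λ_k·b(φ_k, w) for all w ∈ W with reals λ_1, …, λ_N, and let G : V → W denote the a-orthogonal projection onto W. Let û ∈ V and λ̂ > 0 satisfy a(û, w) = λ̂·b(û, w) for all w ∈ W, and suppose there is Λ_sep ≥ 0 with λ̂ ≤ Λ_sep·|λ_k − λ̂| for every index k ≠ j, where j is a fixed index. Then ‖Gû − b(Gû, φ_j)·φ_j‖ ≤ Λ_sep·‖û − Gû‖. -/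

import Mathlib

open RealInnerProductSpace

/-- Steps three to five of the proof of the key Lemma 2.1: spectral-gap bound for the
projected eigenvector.  With `b`-orthonormal eigenvectors `φ_1, …, φ_N` spanning `W`,
`G` the `a`-orthogonal projection onto `W` (characterised by `Gv ∈ W` and
`a(v − Gv, w) = 0` for all `w ∈ W`), an eigenvector `û` with `a(û, w) = λ̂ b(û, w)`
on `W` and the separation `λ̂ ≤ Λ_sep·|λ_k − λ̂|` for all `k ≠ j`, one has
`‖Gû − b(Gû, φ_j)·φ_j‖ ≤ Λ_sep·‖û − Gû‖` in the `b`-seminorm `‖v‖ = ‖ι v‖`. -/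
theorem spectral_gap_bound
    {V : Type*} [NormedAddCommGroup V] [InnerProductSpace ℝ V]
    {H : Type*} [NormedAddCommGroup H] [InnerProductSpace ℝ H]
    (ι : V →ₗ[ℝ] H)
    (N : ℕ) (φ : Fin N → V) (lam : Fin N → ℝ)
    (W : Submodule ℝ V) (hspan : W = Submodule.span ℝ (Set.range φ))
    (horth : ∀ k l : Fin N, ⟪ι (φ k), ι (φ l)⟫ = if k = l then (1 : ℝ) else 0)
    (heig : ∀ k : Fin N, ∀ w ∈ W, ⟪φ k, w⟫ = lam k * ⟪ι (φ k), ι w⟫)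
    (G : V → V) (hGmem : ∀ v : V, G v ∈ W)
    (hGproj : ∀ v : V, ∀ w ∈ W, ⟪v - G v, w⟫ = 0)
    (uhat : V) (lamhat : ℝ) (hlamhat : 0 < lamhat)
    (huhateig : ∀ w ∈ W, ⟪uhat, w⟫ = lamhat * ⟪ι uhat, ι w⟫)
    (j : Fin N) (Λsep : ℝ) (hΛsep : 0 ≤ Λsep)
    (hsep : ∀ k : Fin N, k ≠ j → lamhat ≤ Λsep * |lam k - lamhat|) :
    ‖ι (G uhat - ⟪ι (G uhat), ι (φ j)⟫ • φ j)‖ ≤ Λsep * ‖ι (uhat - G uhat)‖ := by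
  classical
  set v : Fin N → H := fun k => ι (φ k) with hvdef
  have hv : Orthonormal ℝ v := orthonormal_iff_ite.mpr horth
  have hφW : ∀ k, φ k ∈ W := by
    intro k; rw [hspan]; exact Submodule.subset_span ⟨k, rfl⟩
  -- coefficients of G uhat
  obtain ⟨c, hc⟩ : ∃ c : Fin N → ℝ, ∑ k, c k • φ k = G uhat := by
    have h := hGmem uhat
    rw [hspan] at h
    exact (Submodule.mem_span_range_iff_exists_fun ℝ).mp h
  have hιG : ι (G uhat) = ∑ k, c k • v k := by
    rw [← hc, map_sum]; simp [hvdef]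
  have hcoef : ∀ k, ⟪v k, ι (G uhat)⟫ = c k := by
    intro k; rw [hιG]; exact hv.inner_right_fintype c k
  set β : Fin N → ℝ := fun k => ⟪ι (uhat - G uhat), v k⟫ with hβdef
  -- key eigenvalue identity
  have hkey : ∀ k, (lam k - lamhat) * c k = lamhat * β k := by
    intro k
    have h1 : ⟪uhat - G uhat, φ k⟫ = 0 := hGproj uhat (φ k) (hφW k)
    have h1' : ⟪uhat, φ k⟫ = ⟪G uhat, φ k⟫ := by
      have := inner_sub_left (𝕜 := ℝ) uhat (G uhat) (φ k)
      rw [h1] at this; linarith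
    have h2 : ⟪φ k, G uhat⟫ = lam k * c k := by
      rw [heig k (G uhat) (hGmem uhat), ← hcoef k]
    have h3 : ⟪uhat, φ k⟫ = lamhat * ⟪ι uhat, v k⟫ := huhateig (φ k) (hφW k)
    have h4 : ⟪ι uhat, v k⟫ = β k + c k := by
      have := inner_sub_left (𝕜 := ℝ) (ι uhat) (ι (G uhat)) (v k)
      rw [map_sub] at hβdef
      have hβk : β k = ⟪ι uhat, v k⟫ - ⟪ι (G uhat), v k⟫ := by
        simp only [hβdef, map_sub]; exact this
      have hc' : (⟪ι (G uhat), v k⟫ : ℝ) = c k := by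
        rw [real_inner_comm]; exact hcoef k
      rw [hβk]; linarith [hc']
    have h5 : ⟪G uhat, φ k⟫ = lam k * c k := by
      rw [real_inner_comm]; exact h2
    have : lam k * c k = lamhat * (β k + c k) := by
      rw [← h5, ← h1', h3, h4]
    linarith [this]
  -- coefficient bound for k ≠ j
  have hbound : ∀ k, k ≠ j → c k ^ 2 ≤ Λsep ^ 2 * β k ^ 2 := by
    intro k hk
    have hsepk := hsep k hk
    have hΔ : |lam k - lamhat| ≠ 0 := by
      intro h0
      rw [h0, mul_zero] at hsepk
      linarith
    have hΔpos : 0 < |lam k - lamhat| := lt_of_le_of_ne (abs_nonneg _) (Ne.symm hΔ)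
    have habs : |lam k - lamhat| * |c k| = lamhat * |β k| := by
      rw [← abs_mul, hkey k, abs_mul, abs_of_pos hlamhat]
    have h6 : |lam k - lamhat| * |c k| ≤ Λsep * |lam k - lamhat| * |β k| := by
      rw [habs]
      exact mul_le_mul_of_nonneg_right hsepk (abs_nonneg _)
    have h7 : |c k| ≤ Λsep * |β k| := by
      have := (mul_le_mul_iff_right₀ hΔpos).mp (by linarith [h6] : |lam k - lamhat| * |c k| ≤ |lam k - lamhat| * (Λsep * |β k|))
      exact this
    calc c k ^ 2 = |c k| ^ 2 := (sq_abs _).symm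
      _ ≤ (Λsep * |β k|) ^ 2 := by
          exact pow_le_pow_left₀ (abs_nonneg _) h7 2
      _ = Λsep ^ 2 * β k ^ 2 := by rw [mul_pow, sq_abs]
  -- rewrite LHS vector
  set s : Finset (Fin N) := Finset.univ.erase j with hsdef
  have hLHS : ι (G uhat - ⟪ι (G uhat), ι (φ j)⟫ • φ j) = ∑ k ∈ s, c k • v k := by
    have hdj : ⟪ι (G uhat), ι (φ j)⟫ = c j := by
      rw [real_inner_comm]; exact hcoef j
    rw [map_sub, map_smul, hdj, hιG]
    rw [hsdef, ← Finset.sum_erase_add Finset.univ _ (Finset.mem_univ j)]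
    simp [hvdef]
  -- norm computations
  have hnorm2 : ‖ι (G uhat - ⟪ι (G uhat), ι (φ j)⟫ • φ j)‖ ^ 2 = ∑ k ∈ s, c k ^ 2 := by
    rw [hLHS, ← real_inner_self_eq_norm_sq, hv.inner_sum c c s]
    simp [sq]
  have hbessel : ∑ k ∈ s, β k ^ 2 ≤ ‖ι (uhat - G uhat)‖ ^ 2 := by
    have := hv.sum_inner_products_le (x := ι (uhat - G uhat)) (s := s)
    calc ∑ k ∈ s, β k ^ 2 = ∑ k ∈ s, ‖⟪v k, ι (uhat - G uhat)⟫‖ ^ 2 := by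
          refine Finset.sum_congr rfl fun k _ => ?_
          rw [Real.norm_eq_abs, sq_abs, hβdef, real_inner_comm]
      _ ≤ _ := this
  have hsq : ‖ι (G uhat - ⟪ι (G uhat), ι (φ j)⟫ • φ j)‖ ^ 2 ≤ (Λsep * ‖ι (uhat - G uhat)‖) ^ 2 := by
    rw [hnorm2, mul_pow]
    calc ∑ k ∈ s, c k ^ 2 ≤ ∑ k ∈ s, Λsep ^ 2 * β k ^ 2 := by
          refine Finset.sum_le_sum fun k hk => hbound k ?_
          exact (Finset.mem_erase.mp hk).1
      _ = Λsep ^ 2 * ∑ k ∈ s, β k ^ 2 := by rw [Finset.mul_sum]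
      _ ≤ Λsep ^ 2 * ‖ι (uhat - G uhat)‖ ^ 2 :=
          mul_le_mul_of_nonneg_left hbessel (sq_nonneg _)
  have h0 : (0:ℝ) ≤ Λsep * ‖ι (uhat - G uhat)‖ := mul_nonneg hΛsep (norm_nonneg _)
  nlinarith [norm_nonneg (ι (G uhat - ⟪ι (G uhat), ι (φ j)⟫ • φ j))]
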